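/- Let R_a > 0, R > 0, and let C ∈ (0,1] be a constant such that ‖v‖₂ ≤ C·‖∇v‖₂ for every C¹ function v on the closure of Ω vanishing on ∂Ω. Let (ψ₁,θ₁) and (ψ₂,θ₂) be pairs of C² functions on the closure of Ω, each vanishing on ∂Ω, each solving −Δψᵢ − R_a·∂ₓθᵢ = f₁ and J(ψᵢ,θᵢ) = Δθᵢ + f₂ pointwise on Ω (for the same continuous f₁, f₂), and satisfying |∂ₓψᵢ| ≤ R/√2, |∂_yψᵢ| ≤ R/√2, |∂ₓθᵢ| ≤ R/√2, |∂_yθᵢ| ≤ R/√2 on Ω for i = 1, 2. If 1 − C·R/√2 − C·R_a/2 > 0 and 1 − R_a/2 − 2√2·R·C > 0, then ψ₁ = ψ₂ and θ₁ = θ₂ on Ω. -/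

import Mathlib

open MeasureTheory Real Set Filter

set_option maxHeartbeats 2000000

noncomputable section

/-- The open unit square Ω = (0,1) × (0,1) in ℝ². -/
def Omg : Set (ℝ × ℝ) := Ioo (0:ℝ) 1 ×ˢ Ioo (0:ℝ) 1

/-- Partial derivative in the x-direction. -/
def px (f : ℝ × ℝ → ℝ) (p : ℝ × ℝ) : ℝ := fderiv ℝ f p (1, 0)

/-- Partial derivative in the y-direction. -/
def py (f : ℝ × ℝ → ℝ) (p : ℝ × ℝ) : ℝ := fderiv ℝ f p (0, 1)

/-- Laplacian. -/
def lap (f : ℝ × ℝ → ℝ) (p : ℝ × ℝ) : ℝ := px (px f) p + py (py f) p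

/-- Jacobian determinant J(ψ,θ) = ∂ₓψ·∂_yθ − ∂_yψ·∂ₓθ. -/
def Jac (ψ θ : ℝ × ℝ → ℝ) (p : ℝ × ℝ) : ℝ := px ψ p * py θ p - py ψ p * px θ p

/-- The L^q norm over Ω: ‖f‖_q = (∫_Ω |f|^q)^(1/q). -/
def Lnorm (f : ℝ × ℝ → ℝ) (q : ℝ) : ℝ := (∫ p in Omg, |f p| ^ q) ^ (1 / q)

/-- ‖∇f‖₂ = (∫_Ω (|∂ₓf|² + |∂_yf|²))^(1/2). -/
def gradNorm (f : ℝ × ℝ → ℝ) : ℝ :=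
  (∫ p in Omg, (|px f p| ^ 2 + |py f p| ^ 2)) ^ ((1:ℝ) / 2)

lemma Omg_open : IsOpen Omg := (isOpen_Ioo).prod isOpen_Ioo
lemma Omg_meas : MeasurableSet Omg := Omg_open.measurableSet
lemma closure_Omg : closure Omg = Icc ((0:ℝ),(0:ℝ)) (1,1) := by
  rw [Icc_prod_eq]; simp [Omg, closure_prod_eq]
lemma mem_nhds_closure {p : ℝ × ℝ} (hp : p ∈ Omg) : closure Omg ∈ nhds p :=
  Filter.mem_of_superset (Omg_open.mem_nhds hp) subset_closure
lemma uniqueDiffOn_closure : UniqueDiffOn ℝ (closure Omg) := by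
  apply uniqueDiffOn_convex (((convex_Ioo (0:ℝ) 1).prod (convex_Ioo (0:ℝ) 1)).closure)
  refine Nonempty.mono (interior_mono subset_closure) ?_
  rw [show interior (Ioo (0:ℝ) 1 ×ˢ Ioo (0:ℝ) 1) = Omg from Omg_open.interior_eq]
  exact ⟨((1:ℝ)/2, 1/2), by constructor <;> norm_num⟩

section
variable {u : ℝ × ℝ → ℝ}

lemma diffAt (hu : ContDiffOn ℝ 2 u (closure Omg)) {p : ℝ × ℝ} (hp : p ∈ Omg) :
    DifferentiableAt ℝ u p :=
  ((hu.mono subset_closure).contDiffAt (Omg_open.mem_nhds hp)).differentiableAt (by norm_num)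

lemma contDiffOn_px (hu : ContDiffOn ℝ 2 u (closure Omg)) : ContDiffOn ℝ 1 (px u) Omg := by
  have h := (hu.mono subset_closure).fderiv_of_isOpen (m := 1) Omg_open (by norm_num)
  exact h.clm_apply contDiffOn_const

lemma contDiffOn_py (hu : ContDiffOn ℝ 2 u (closure Omg)) : ContDiffOn ℝ 1 (py u) Omg := by
  have h := (hu.mono subset_closure).fderiv_of_isOpen (m := 1) Omg_open (by norm_num)
  exact h.clm_apply contDiffOn_const

lemma diffAt_px (hu : ContDiffOn ℝ 2 u (closure Omg)) {p : ℝ × ℝ} (hp : p ∈ Omg) :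
    DifferentiableAt ℝ (px u) p :=
  ((contDiffOn_px hu).contDiffAt (Omg_open.mem_nhds hp)).differentiableAt one_ne_zero

lemma diffAt_py (hu : ContDiffOn ℝ 2 u (closure Omg)) {p : ℝ × ℝ} (hp : p ∈ Omg) :
    DifferentiableAt ℝ (py u) p :=
  ((contDiffOn_py hu).contDiffAt (Omg_open.mem_nhds hp)).differentiableAt one_ne_zero

lemma exists_bound_cont (hg : ContinuousOn u (closure Omg)) :
    ∃ M, ∀ p ∈ closure Omg, |u p| ≤ M := by
  have hc : IsCompact (closure Omg) := by rw [closure_Omg]; exact isCompact_Icc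
  obtain ⟨M, hM⟩ := hc.exists_bound_of_continuousOn hg
  exact ⟨M, fun p hp => by simpa [Real.norm_eq_abs] using hM p hp⟩

lemma exists_bound_deriv (hu : ContDiffOn ℝ 2 u (closure Omg)) :
    ∃ M, ∀ p ∈ Omg, |px u p| ≤ M ∧ |py u p| ≤ M := by
  have hg := hu.continuousOn_fderivWithin uniqueDiffOn_closure (by norm_num)
  have hc : IsCompact (closure Omg) := by rw [closure_Omg]; exact isCompact_Icc
  obtain ⟨M, hM⟩ := hc.exists_bound_of_continuousOn hg
  refine ⟨M, fun p hp => ?_⟩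
  have heq : fderivWithin ℝ u (closure Omg) p = fderiv ℝ u p :=
    fderivWithin_of_mem_nhds (mem_nhds_closure hp)
  have hMp := hM p (subset_closure hp)
  rw [heq] at hMp
  have h1 : ‖((1:ℝ),(0:ℝ))‖ ≤ 1 := by simp [Prod.norm_def]
  have h2 : ‖((0:ℝ),(1:ℝ))‖ ≤ 1 := by simp [Prod.norm_def]
  constructor
  · calc |px u p| ≤ ‖fderiv ℝ u p‖ * ‖((1:ℝ),(0:ℝ))‖ := (fderiv ℝ u p).le_opNorm _
      _ ≤ M * 1 := by
          apply mul_le_mul hMp h1 (norm_nonneg _) (le_trans (norm_nonneg _) hMp)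
      _ = M := mul_one M
  · calc |py u p| ≤ ‖fderiv ℝ u p‖ * ‖((0:ℝ),(1:ℝ))‖ := (fderiv ℝ u p).le_opNorm _
      _ ≤ M * 1 := by
          apply mul_le_mul hMp h2 (norm_nonneg _) (le_trans (norm_nonneg _) hMp)
      _ = M := mul_one M
end

lemma Omg_vol_lt : volume Omg < ⊤ :=
  lt_of_le_of_lt (by rw [← closure_Omg]; exact measure_mono subset_closure)
    ((isCompact_Icc).measure_lt_top)
instance : IsFiniteMeasure (volume.restrict Omg) :=
  ⟨by rw [Measure.restrict_apply_univ]; exact Omg_vol_lt⟩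

lemma integrableOn_bdd {g : ℝ × ℝ → ℝ} (hg : ContinuousOn g Omg) {M : ℝ}
    (hM : ∀ p ∈ Omg, |g p| ≤ M) : IntegrableOn g Omg := by
  refine ⟨hg.aestronglyMeasurable Omg_meas, ?_⟩
  apply HasFiniteIntegral.of_bounded (C := M)
  exact (ae_restrict_iff' Omg_meas).2 (Filter.Eventually.of_forall (fun p hp => by
    simpa [Real.norm_eq_abs] using hM p hp))

lemma mem_frontier {p : ℝ × ℝ} (hp : p ∈ closure Omg) (hp2 : p ∉ Omg) : p ∈ frontier Omg := by
  rw [frontier, Omg_open.interior_eq]; exact ⟨hp, hp2⟩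

lemma divThmZero (F G : ℝ × ℝ → ℝ) (f' g' : ℝ × ℝ → ℝ × ℝ →L[ℝ] ℝ)
    (Hcf : ContinuousOn F (closure Omg)) (Hcg : ContinuousOn G (closure Omg))
    (Hdf : ∀ x ∈ Omg, HasFDerivAt F (f' x) x)
    (Hdg : ∀ x ∈ Omg, HasFDerivAt G (g' x) x)
    (Hi : IntegrableOn (fun x => f' x (1, 0) + g' x (0, 1)) (closure Omg))
    (hFb : ∀ p ∈ frontier Omg, F p = 0) (hGb : ∀ p ∈ frontier Omg, G p = 0) :
    (∫ x in closure Omg, f' x (1, 0) + g' x (0, 1)) = 0 := by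
  rw [closure_Omg] at Hcf Hcg Hi ⊢
  have hle : ((0:ℝ),(0:ℝ)) ≤ (1,1) := by constructor <;> norm_num
  have key := integral_divergence_prod_Icc_of_hasFDerivAt_off_countable_of_le F G f' g'
    ((0:ℝ),(0:ℝ)) (1,1) hle ∅ countable_empty Hcf Hcg
    (fun x hx => Hdf x (by simpa [Omg] using hx.1))
    (fun x hx => Hdg x (by simpa [Omg] using hx.1)) Hi
  rw [key]
  have hfr : ∀ (x : ℝ), x ∈ Set.uIcc (0:ℝ) 1 → ∀ (y : ℝ), (y = 0 ∨ y = 1) →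
      ((x, y) ∈ frontier Omg ∧ (y, x) ∈ frontier Omg) := by
    intro x hx y hy
    rw [Set.uIcc_of_le (by norm_num : (0:ℝ) ≤ 1)] at hx
    constructor <;> apply mem_frontier
    · rw [closure_Omg]; exact ⟨⟨hx.1, by rcases hy with h|h <;> simp [h]⟩,
        ⟨hx.2, by rcases hy with h|h <;> simp [h]⟩⟩
    · rintro ⟨-, h2⟩; rcases hy with h|h <;> simp [h, Omg] at h2
    · rw [closure_Omg]; exact ⟨⟨by rcases hy with h|h <;> simp [h], hx.1⟩,
        ⟨by rcases hy with h|h <;> simp [h], hx.2⟩⟩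
    · rintro ⟨h2, -⟩; rcases hy with h|h <;> simp [h, Omg] at h2
  have e1 : (∫ x in (0:ℝ)..1, G (x, (1:ℝ))) = ∫ _ in (0:ℝ)..1, (0:ℝ) := by
    apply intervalIntegral.integral_congr
    intro t ht
    show G (t, 1) = 0
    exact hGb _ (hfr t ht 1 (Or.inr rfl)).1
  have e2 : (∫ x in (0:ℝ)..1, G (x, (0:ℝ))) = ∫ _ in (0:ℝ)..1, (0:ℝ) := by
    apply intervalIntegral.integral_congr
    intro t ht
    show G (t, 0) = 0
    exact hGb _ (hfr t ht 0 (Or.inl rfl)).1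
  have e3 : (∫ y in (0:ℝ)..1, F ((1:ℝ), y)) = ∫ _ in (0:ℝ)..1, (0:ℝ) := by
    apply intervalIntegral.integral_congr
    intro t ht
    show F (1, t) = 0
    exact hFb _ (hfr t ht 1 (Or.inr rfl)).2
  have e4 : (∫ y in (0:ℝ)..1, F ((0:ℝ), y)) = ∫ _ in (0:ℝ)..1, (0:ℝ) := by
    apply intervalIntegral.integral_congr
    intro t ht
    show F (0, t) = 0
    exact hFb _ (hfr t ht 0 (Or.inl rfl)).2
  rw [e1, e2, e3, e4, intervalIntegral.integral_zero]
  ring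

lemma center_mem : ((1:ℝ)/2, (1:ℝ)/2) ∈ Omg := by constructor <;> constructor <;> norm_num

lemma green (u h : ℝ × ℝ → ℝ) (hu : ContDiffOn ℝ 2 u (closure Omg))
    (hub : ∀ p ∈ frontier Omg, u p = 0)
    (hlap : ∀ p ∈ Omg, lap u p = h p)
    (hh : ContinuousOn h Omg) {M : ℝ} (hhM : ∀ p ∈ Omg, |h p| ≤ M) :
    ∫ p in Omg, (|px u p| ^ 2 + |py u p| ^ 2) = - ∫ p in Omg, u p * h p := by
  obtain ⟨Mu, hMu⟩ := exists_bound_cont hu.continuousOn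
  obtain ⟨Md, hMd⟩ := exists_bound_deriv hu
  have hMu0 : 0 ≤ Mu := le_trans (abs_nonneg _) (hMu _ (subset_closure center_mem))
  have hMd0 : 0 ≤ Md := le_trans (abs_nonneg _) (hMd _ center_mem).1
  have hM0 : 0 ≤ M := le_trans (abs_nonneg _) (hhM _ center_mem)
  set g1 := fderivWithin ℝ u (closure Omg) with hg1def
  have hg1 : ContinuousOn g1 (closure Omg) :=
    hu.continuousOn_fderivWithin uniqueDiffOn_closure (by norm_num)
  set F := fun p => u p * g1 p (1,0) with hFdef
  set G := fun p => u p * g1 p (0,1) with hGdef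
  have hFeq : ∀ p ∈ Omg, F p = u p * px u p := by
    intro p hp
    rw [hFdef]
    simp only [px, hg1def, fderivWithin_of_mem_nhds (mem_nhds_closure hp)]
  have hGeq : ∀ p ∈ Omg, G p = u p * py u p := by
    intro p hp
    rw [hGdef]
    simp only [py, hg1def, fderivWithin_of_mem_nhds (mem_nhds_closure hp)]
  set f' := Omg.indicator (fun p => u p • fderiv ℝ (px u) p + px u p • fderiv ℝ u p) with hf'def
  set g' := Omg.indicator (fun p => u p • fderiv ℝ (py u) p + py u p • fderiv ℝ u p) with hg'def
  have Hcf : ContinuousOn F (closure Omg) :=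
    hu.continuousOn.mul (hg1.clm_apply continuousOn_const)
  have Hcg : ContinuousOn G (closure Omg) :=
    hu.continuousOn.mul (hg1.clm_apply continuousOn_const)
  have Hdf : ∀ x ∈ Omg, HasFDerivAt F (f' x) x := by
    intro x hx
    rw [hf'def, Set.indicator_of_mem hx]
    have h1 : HasFDerivAt (fun q => u q * px u q)
        (u x • fderiv ℝ (px u) x + px u x • fderiv ℝ u x) x :=
      (diffAt hu hx).hasFDerivAt.mul (diffAt_px hu hx).hasFDerivAt
    apply h1.congr_of_eventuallyEq
    exact Filter.eventually_of_mem (Omg_open.mem_nhds hx) hFeq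
  have Hdg : ∀ x ∈ Omg, HasFDerivAt G (g' x) x := by
    intro x hx
    rw [hg'def, Set.indicator_of_mem hx]
    have h1 : HasFDerivAt (fun q => u q * py u q)
        (u x • fderiv ℝ (py u) x + py u x • fderiv ℝ u x) x :=
      (diffAt hu hx).hasFDerivAt.mul (diffAt_py hu hx).hasFDerivAt
    apply h1.congr_of_eventuallyEq
    exact Filter.eventually_of_mem (Omg_open.mem_nhds hx) hGeq
  set D := fun p => (|px u p| ^ 2 + |py u p| ^ 2) + u p * h p with hDdef
  have hDind : (fun x => f' x (1,0) + g' x (0,1)) = Omg.indicator D := by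
    funext p
    by_cases hp : p ∈ Omg
    · rw [hf'def, hg'def, Set.indicator_of_mem hp, Set.indicator_of_mem hp,
        Set.indicator_of_mem hp, hDdef]
      simp only [ContinuousLinearMap.add_apply, ContinuousLinearMap.coe_smul',
        Pi.smul_apply, smul_eq_mul]
      rw [← hlap p hp]
      show u p * px (px u) p + px u p * px u p + (u p * py (py u) p + py u p * py u p) = _
      simp only [lap, sq_abs]
      ring
    · rw [hf'def, hg'def, Set.indicator_of_notMem hp, Set.indicator_of_notMem hp,
        Set.indicator_of_notMem hp]
      simp
  have hDcont : ContinuousOn D Omg := by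
    apply ContinuousOn.add
    · exact (((contDiffOn_px hu).continuousOn.abs.pow 2).add
        ((contDiffOn_py hu).continuousOn.abs.pow 2))
    · exact (hu.continuousOn.mono subset_closure).mul hh
  have hDbdd : ∀ p ∈ Omg, |D p| ≤ (Md ^ 2 + Md ^ 2) + Mu * M := by
    intro p hp
    have h1 := (hMd p hp).1
    have h2 := (hMd p hp).2
    have h3 := hMu p (subset_closure hp)
    have h4 := hhM p hp
    have e1 : |px u p| ^ 2 ≤ Md ^ 2 := by nlinarith [abs_nonneg (px u p)]
    have e2 : |py u p| ^ 2 ≤ Md ^ 2 := by nlinarith [abs_nonneg (py u p)]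
    have e3 : |u p * h p| ≤ Mu * M := by
      rw [abs_mul]
      exact mul_le_mul h3 h4 (abs_nonneg _) hMu0
    calc |D p| ≤ |(|px u p| ^ 2 + |py u p| ^ 2)| + |u p * h p| := abs_add_le _ _
      _ ≤ (Md ^ 2 + Md ^ 2) + Mu * M := by
          rw [abs_of_nonneg (by positivity)]
          exact add_le_add (add_le_add e1 e2) e3
  have hDint : IntegrableOn D Omg := integrableOn_bdd hDcont hDbdd
  have Hi : IntegrableOn (fun x => f' x (1, 0) + g' x (0, 1)) (closure Omg) := by
    rw [hDind]
    exact ((integrable_indicator_iff Omg_meas).2 hDint).integrableOn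
  have hFb : ∀ p ∈ frontier Omg, F p = 0 := by
    intro p hp; rw [hFdef]; simp [hub p hp]
  have hGb : ∀ p ∈ frontier Omg, G p = 0 := by
    intro p hp; rw [hGdef]; simp [hub p hp]
  have key := divThmZero F G f' g' Hcf Hcg Hdf Hdg Hi hFb hGb
  rw [hDind] at key
  rw [setIntegral_indicator Omg_meas] at key
  rw [inter_eq_self_of_subset_right subset_closure] at key
  have hsplit : ∫ p in Omg, D p =
      (∫ p in Omg, (|px u p| ^ 2 + |py u p| ^ 2)) + ∫ p in Omg, u p * h p := by
    rw [hDdef]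
    apply integral_add
    · apply integrableOn_bdd (((contDiffOn_px hu).continuousOn.abs.pow 2).add
        ((contDiffOn_py hu).continuousOn.abs.pow 2)) (M := Md ^ 2 + Md ^ 2)
      intro p hp
      have h1 := (hMd p hp).1
      have h2 := (hMd p hp).2
      have e1 : |px u p| ^ 2 ≤ Md ^ 2 := by nlinarith [abs_nonneg (px u p)]
      have e2 : |py u p| ^ 2 ≤ Md ^ 2 := by nlinarith [abs_nonneg (py u p)]
      simp only [Pi.add_apply, Pi.pow_apply]
      rw [abs_of_nonneg (by positivity)]
      exact add_le_add e1 e2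
    · apply integrableOn_bdd ((hu.continuousOn.mono subset_closure).mul hh) (M := Mu * M)
      intro p hp
      simp only [Pi.mul_apply]
      rw [abs_mul]
      exact mul_le_mul (hMu p (subset_closure hp)) (hhM p hp) (abs_nonneg _) hMu0
  rw [hsplit] at key
  linarith [key]

lemma cauchySchwarz {f g : ℝ × ℝ → ℝ} (hf : ContinuousOn f Omg) (hg : ContinuousOn g Omg)
    {Mf Mg : ℝ} (hMf : ∀ p ∈ Omg, |f p| ≤ Mf) (hMg : ∀ p ∈ Omg, |g p| ≤ Mg) :
    ∫ p in Omg, |f p| * |g p| ≤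
      (∫ p in Omg, |f p| ^ 2) ^ ((1:ℝ)/2) * (∫ p in Omg, |g p| ^ 2) ^ ((1:ℝ)/2) := by
  have hpq : Real.HolderConjugate 2 2 := Real.HolderConjugate.two_two
  have hfm : MemLp (fun p => |f p|) (ENNReal.ofReal 2) (volume.restrict Omg) := by
    apply MemLp.of_bound (hf.abs.aestronglyMeasurable Omg_meas) Mf
    exact (ae_restrict_iff' Omg_meas).2 (Filter.Eventually.of_forall fun p hp => by
      simpa [Real.norm_eq_abs, abs_abs] using hMf p hp)
  have hgm : MemLp (fun p => |g p|) (ENNReal.ofReal 2) (volume.restrict Omg) := by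
    apply MemLp.of_bound (hg.abs.aestronglyMeasurable Omg_meas) Mg
    exact (ae_restrict_iff' Omg_meas).2 (Filter.Eventually.of_forall fun p hp => by
      simpa [Real.norm_eq_abs, abs_abs] using hMg p hp)
  have h := integral_mul_le_Lp_mul_Lq_of_nonneg hpq
    (Filter.Eventually.of_forall fun p => abs_nonneg (f p))
    (Filter.Eventually.of_forall fun p => abs_nonneg (g p)) hfm hgm
  simp only [show ((2:ℝ)) = ((2:ℕ):ℝ) by norm_num, Real.rpow_natCast] at h
  convert h using 3 <;> norm_num

lemma eq_zero_of_integral_sq_zero {g : ℝ × ℝ → ℝ} (hg : ContinuousOn g Omg) {M : ℝ}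
    (hM : ∀ p ∈ Omg, |g p| ≤ M) (h0 : (∫ p in Omg, |g p| ^ 2) = 0) :
    ∀ p ∈ Omg, g p = 0 := by
  intro p₀ hp₀
  by_contra hne
  have hM0 : 0 ≤ M := le_trans (abs_nonneg _) (hM _ center_mem)
  have hint : IntegrableOn (fun p => |g p| ^ 2) Omg := by
    apply integrableOn_bdd (hg.abs.pow 2) (M := M ^ 2)
    intro p hp
    have := hM p hp
    have := abs_nonneg (g p)
    simp only [Pi.pow_apply]
    rw [abs_of_nonneg (by positivity)]
    nlinarith
  set c := |g p₀| ^ 2 / 2 with hcdef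
  have hc : 0 < c := by
    have : 0 < |g p₀| := abs_pos.2 hne
    positivity
  have hlt : c < |g p₀| ^ 2 := by
    have : 0 < |g p₀| := abs_pos.2 hne
    rw [hcdef]; nlinarith
  have hca : ContinuousAt (fun q => |g q| ^ 2) p₀ :=
    ((hg.abs.pow 2).continuousAt (Omg_open.mem_nhds hp₀))
  have hev : (fun q => |g q| ^ 2) ⁻¹' (Set.Ioi c) ∈ nhds p₀ := hca (Ioi_mem_nhds hlt)
  obtain ⟨ε, hε, hball⟩ := Metric.mem_nhds_iff.1
    (Filter.inter_mem hev (Omg_open.mem_nhds hp₀))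
  have hsub : Metric.ball p₀ ε ⊆ Omg := fun q hq => (hball hq).2
  have hgeball : ∀ q ∈ Metric.ball p₀ ε, c ≤ |g q| ^ 2 := fun q hq => le_of_lt (hball hq).1
  have hvolpos : 0 < volume (Metric.ball p₀ ε) := Metric.measure_ball_pos volume p₀ hε
  have hvolne : volume (Metric.ball p₀ ε) ≠ ⊤ := (measure_ball_lt_top).ne
  have h1 : c * (volume (Metric.ball p₀ ε)).toReal ≤ ∫ p in Metric.ball p₀ ε, |g p| ^ 2 :=
    by have := setIntegral_ge_of_const_le_real measurableSet_ball hvolne hgeball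
         (hint.mono_set hsub)
       rwa [measureReal_def] at this
  have h2 : (∫ p in Metric.ball p₀ ε, |g p| ^ 2) ≤ ∫ p in Omg, |g p| ^ 2 := by
    apply setIntegral_mono_set hint
    · exact (ae_restrict_iff' Omg_meas).2 (Filter.Eventually.of_forall fun p _ => by positivity)
    · exact HasSubset.Subset.eventuallyLE hsub
  have h3 : 0 < c * (volume (Metric.ball p₀ ε)).toReal :=
    mul_pos hc (ENNReal.toReal_pos hvolpos.ne' hvolne)
  linarith [h0 ▸ le_trans h1 h2]

section linearity
variable {f g : ℝ × ℝ → ℝ}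

lemma px_sub (hf : ContDiffOn ℝ 2 f (closure Omg)) (hg : ContDiffOn ℝ 2 g (closure Omg))
    {p : ℝ × ℝ} (hp : p ∈ Omg) :
    px (fun q => f q - g q) p = px f p - px g p := by
  simp only [px]
  rw [fderiv_fun_sub (diffAt hf hp) (diffAt hg hp)]
  simp

lemma py_sub (hf : ContDiffOn ℝ 2 f (closure Omg)) (hg : ContDiffOn ℝ 2 g (closure Omg))
    {p : ℝ × ℝ} (hp : p ∈ Omg) :
    py (fun q => f q - g q) p = py f p - py g p := by
  simp only [py]
  rw [fderiv_fun_sub (diffAt hf hp) (diffAt hg hp)]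
  simp

lemma lap_sub (hf : ContDiffOn ℝ 2 f (closure Omg)) (hg : ContDiffOn ℝ 2 g (closure Omg))
    {p : ℝ × ℝ} (hp : p ∈ Omg) :
    lap (fun q => f q - g q) p = lap f p - lap g p := by
  have hevx : px (fun q => f q - g q) =ᶠ[nhds p] fun q => px f q - px g q :=
    Filter.eventually_of_mem (Omg_open.mem_nhds hp) (fun q hq => px_sub hf hg hq)
  have hevy : py (fun q => f q - g q) =ᶠ[nhds p] fun q => py f q - py g q :=
    Filter.eventually_of_mem (Omg_open.mem_nhds hp) (fun q hq => py_sub hf hg hq)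
  simp only [lap, px, py]
  rw [hevx.fderiv_eq, hevy.fderiv_eq,
    fderiv_fun_sub (diffAt_px hf hp) (diffAt_px hg hp),
    fderiv_fun_sub (diffAt_py hf hp) (diffAt_py hg hp)]
  simp only [ContinuousLinearMap.coe_sub', Pi.sub_apply]
  ring
end linearity

lemma abs4 (x1 x2 x3 x4 : ℝ) : |x1 + x2 - x3 - x4| ≤ |x1| + |x2| + |x3| + |x4| := by
  have h1 := abs_add_le (x1 + x2) (-(x3 + x4))
  have h2 := abs_add_le x1 x2
  have h3 := abs_add_le x3 x4
  rw [abs_neg] at h1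
  have : x1 + x2 - x3 - x4 = x1 + x2 + -(x3 + x4) := by ring
  rw [this]
  linarith

lemma abs_sub_le' (a b : ℝ) : |a - b| ≤ |a| + |b| := by
  have := abs_add_le a (-b); simpa [sub_eq_add_neg] using this

/-- Uniqueness (Lemma 3) for classical solutions of the coupled system. -/
theorem stmt_5 (Ra R C : ℝ) (hRa : 0 < Ra) (hR : 0 < R) (hC0 : 0 < C) (hC1 : C ≤ 1)
    (hPoincare : ∀ v : ℝ × ℝ → ℝ, ContDiffOn ℝ 1 v (closure Omg) →
      (∀ p ∈ frontier Omg, v p = 0) → Lnorm v 2 ≤ C * gradNorm v)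
    (f₁ f₂ : ℝ × ℝ → ℝ) (hf₁ : ContinuousOn f₁ (closure Omg))
    (hf₂ : ContinuousOn f₂ (closure Omg))
    (ψ₁ θ₁ ψ₂ θ₂ : ℝ × ℝ → ℝ)
    (hψ₁ : ContDiffOn ℝ 2 ψ₁ (closure Omg)) (hθ₁ : ContDiffOn ℝ 2 θ₁ (closure Omg))
    (hψ₂ : ContDiffOn ℝ 2 ψ₂ (closure Omg)) (hθ₂ : ContDiffOn ℝ 2 θ₂ (closure Omg))
    (hψ₁b : ∀ p ∈ frontier Omg, ψ₁ p = 0) (hθ₁b : ∀ p ∈ frontier Omg, θ₁ p = 0)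
    (hψ₂b : ∀ p ∈ frontier Omg, ψ₂ p = 0) (hθ₂b : ∀ p ∈ frontier Omg, θ₂ p = 0)
    (heq1₁ : ∀ p ∈ Omg, -(lap ψ₁ p) - Ra * px θ₁ p = f₁ p)
    (heq2₁ : ∀ p ∈ Omg, Jac ψ₁ θ₁ p = lap θ₁ p + f₂ p)
    (heq1₂ : ∀ p ∈ Omg, -(lap ψ₂ p) - Ra * px θ₂ p = f₁ p)
    (heq2₂ : ∀ p ∈ Omg, Jac ψ₂ θ₂ p = lap θ₂ p + f₂ p)
    (hb₁ : ∀ p ∈ Omg, |px ψ₁ p| ≤ R / Real.sqrt 2 ∧ |py ψ₁ p| ≤ R / Real.sqrt 2 ∧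
      |px θ₁ p| ≤ R / Real.sqrt 2 ∧ |py θ₁ p| ≤ R / Real.sqrt 2)
    (hb₂ : ∀ p ∈ Omg, |px ψ₂ p| ≤ R / Real.sqrt 2 ∧ |py ψ₂ p| ≤ R / Real.sqrt 2 ∧
      |px θ₂ p| ≤ R / Real.sqrt 2 ∧ |py θ₂ p| ≤ R / Real.sqrt 2)
    (hcond1 : 0 < 1 - C * R / Real.sqrt 2 - C * Ra / 2)
    (hcond2 : 0 < 1 - Ra / 2 - 2 * Real.sqrt 2 * R * C) :
    ∀ p ∈ Omg, ψ₁ p = ψ₂ p ∧ θ₁ p = θ₂ p := by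
  have hsqrt2 : (0:ℝ) < Real.sqrt 2 := Real.sqrt_pos.2 (by norm_num)
  have hs2 : Real.sqrt 2 * Real.sqrt 2 = 2 := Real.mul_self_sqrt (by norm_num)
  set s := R / Real.sqrt 2 with hsdef
  have hs0 : 0 < s := div_pos hR hsqrt2
  set w := fun q => ψ₁ q - ψ₂ q with hwdef
  set τ := fun q => θ₁ q - θ₂ q with hτdef
  have hw : ContDiffOn ℝ 2 w (closure Omg) := hψ₁.sub hψ₂
  have hτ2 : ContDiffOn ℝ 2 τ (closure Omg) := hθ₁.sub hθ₂
  have hwb : ∀ q ∈ frontier Omg, w q = 0 := fun q hq => by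
    simp [hwdef, hψ₁b q hq, hψ₂b q hq]
  have hτb : ∀ q ∈ frontier Omg, τ q = 0 := fun q hq => by
    simp [hτdef, hθ₁b q hq, hθ₂b q hq]
  -- derivative identities and bounds
  have hxw : ∀ q ∈ Omg, px w q = px ψ₁ q - px ψ₂ q := fun q hq => px_sub hψ₁ hψ₂ hq
  have hyw : ∀ q ∈ Omg, py w q = py ψ₁ q - py ψ₂ q := fun q hq => py_sub hψ₁ hψ₂ hq
  have hxτ : ∀ q ∈ Omg, px τ q = px θ₁ q - px θ₂ q := fun q hq => px_sub hθ₁ hθ₂ hq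
  have hyτ : ∀ q ∈ Omg, py τ q = py θ₁ q - py θ₂ q := fun q hq => py_sub hθ₁ hθ₂ hq
  have hpxw : ∀ q ∈ Omg, |px w q| ≤ 2 * s := by
    intro q hq
    rw [hxw q hq]
    have := abs_sub_le' (px ψ₁ q) (px ψ₂ q)
    have h1 := (hb₁ q hq).1
    have h2 := (hb₂ q hq).1
    linarith
  have hpyw : ∀ q ∈ Omg, |py w q| ≤ 2 * s := by
    intro q hq
    rw [hyw q hq]
    have := abs_sub_le' (py ψ₁ q) (py ψ₂ q)
    have h1 := (hb₁ q hq).2.1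
    have h2 := (hb₂ q hq).2.1
    linarith
  have hpxτ : ∀ q ∈ Omg, |px τ q| ≤ 2 * s := by
    intro q hq
    rw [hxτ q hq]
    have := abs_sub_le' (px θ₁ q) (px θ₂ q)
    have h1 := (hb₁ q hq).2.2.1
    have h2 := (hb₂ q hq).2.2.1
    linarith
  have hpyτ : ∀ q ∈ Omg, |py τ q| ≤ 2 * s := by
    intro q hq
    rw [hyτ q hq]
    have := abs_sub_le' (py θ₁ q) (py θ₂ q)
    have h1 := (hb₁ q hq).2.2.2
    have h2 := (hb₂ q hq).2.2.2
    linarith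
  obtain ⟨Mw, hMw⟩ := exists_bound_cont hw.continuousOn
  obtain ⟨Mτ, hMτ⟩ := exists_bound_cont hτ2.continuousOn
  have hMw0 : 0 ≤ Mw := le_trans (abs_nonneg _) (hMw _ (subset_closure center_mem))
  have hMτ0 : 0 ≤ Mτ := le_trans (abs_nonneg _) (hMτ _ (subset_closure center_mem))
  -- PDEs for differences
  have hlapw : ∀ q ∈ Omg, lap w q = -(Ra * px τ q) := by
    intro q hq
    have h1 := heq1₁ q hq
    have h2 := heq1₂ q hq
    rw [hwdef]
    rw [lap_sub hψ₁ hψ₂ hq, hxτ q hq]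
    ring_nf
    ring_nf at h1 h2
    linarith
  have hlapτ : ∀ q ∈ Omg, lap τ q = Jac ψ₁ θ₁ q - Jac ψ₂ θ₂ q := by
    intro q hq
    have h1 := heq2₁ q hq
    have h2 := heq2₂ q hq
    rw [hτdef, lap_sub hθ₁ hθ₂ hq]
    linarith
  -- Jacobian difference bound
  have hJd : ∀ q ∈ Omg, |Jac ψ₁ θ₁ q - Jac ψ₂ θ₂ q| ≤
      s * (|px w q| + |py w q| + |px τ q| + |py τ q|) := by
    intro q hq
    have hkey : Jac ψ₁ θ₁ q - Jac ψ₂ θ₂ q =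
        px w q * py θ₁ q + px ψ₂ q * py τ q
          - py w q * px θ₁ q - py ψ₂ q * px τ q := by
      simp only [Jac, hxw q hq, hyw q hq, hxτ q hq, hyτ q hq]
      ring
    rw [hkey]
    have e := abs4 (px w q * py θ₁ q) (px ψ₂ q * py τ q)
      (py w q * px θ₁ q) (py ψ₂ q * px τ q)
    have m1 : |px w q * py θ₁ q| ≤ |px w q| * s := by
      rw [abs_mul]
      exact mul_le_mul_of_nonneg_left (hb₁ q hq).2.2.2 (abs_nonneg _)
    have m2 : |px ψ₂ q * py τ q| ≤ s * |py τ q| := by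
      rw [abs_mul]
      exact mul_le_mul_of_nonneg_right (hb₂ q hq).1 (abs_nonneg _)
    have m3 : |py w q * px θ₁ q| ≤ |py w q| * s := by
      rw [abs_mul]
      exact mul_le_mul_of_nonneg_left (hb₁ q hq).2.2.1 (abs_nonneg _)
    have m4 : |py ψ₂ q * px τ q| ≤ s * |px τ q| := by
      rw [abs_mul]
      exact mul_le_mul_of_nonneg_right (hb₂ q hq).2.1 (abs_nonneg _)
    nlinarith [e, m1, m2, m3, m4]
  -- continuity of derivatives
  have hpxwc : ContinuousOn (px w) Omg := (contDiffOn_px hw).continuousOn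
  have hpywc : ContinuousOn (py w) Omg := (contDiffOn_py hw).continuousOn
  have hpxτc : ContinuousOn (px τ) Omg := (contDiffOn_px hτ2).continuousOn
  have hpyτc : ContinuousOn (py τ) Omg := (contDiffOn_py hτ2).continuousOn
  have hwc : ContinuousOn w Omg := hw.continuousOn.mono subset_closure
  have hτc : ContinuousOn τ Omg := hτ2.continuousOn.mono subset_closure
  have hMwO : ∀ q ∈ Omg, |w q| ≤ Mw := fun q hq => hMw q (subset_closure hq)
  have hMτO : ∀ q ∈ Omg, |τ q| ≤ Mτ := fun q hq => hMτ q (subset_closure hq)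
  -- energies
  set A := ∫ p in Omg, (|px w p| ^ 2 + |py w p| ^ 2) with hAdef
  set B := ∫ p in Omg, (|px τ p| ^ 2 + |py τ p| ^ 2) with hBdef
  have hA0 : 0 ≤ A := hAdef ▸ integral_nonneg (fun q => by positivity)
  have hB0 : 0 ≤ B := hBdef ▸ integral_nonneg (fun q => by positivity)
  set a := A ^ ((1:ℝ)/2) with hadef
  set b := B ^ ((1:ℝ)/2) with hbdef
  have ha0 : 0 ≤ a := Real.rpow_nonneg hA0 _
  have hb0 : 0 ≤ b := Real.rpow_nonneg hB0 _
  have ha2 : a ^ 2 = A := by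
    rw [hadef, ← Real.rpow_natCast (A ^ ((1:ℝ)/2)) 2, ← Real.rpow_mul hA0]
    norm_num
  have hb2 : b ^ 2 = B := by
    rw [hbdef, ← Real.rpow_natCast (B ^ ((1:ℝ)/2)) 2, ← Real.rpow_mul hB0]
    norm_num
  -- integrability of squares
  have isq : ∀ (g : ℝ × ℝ → ℝ), ContinuousOn g Omg → (∀ q ∈ Omg, |g q| ≤ 2*s) →
      IntegrableOn (fun q => |g q| ^ 2) Omg := by
    intro g hc hbd
    apply integrableOn_bdd (hc.abs.pow 2) (M := (2*s) ^ 2)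
    intro q hq
    simp only [Pi.pow_apply]
    rw [abs_of_nonneg (by positivity)]
    exact pow_le_pow_left₀ (abs_nonneg _) (hbd q hq) 2
  have ipxw2 := isq _ hpxwc hpxw
  have ipyw2 := isq _ hpywc hpyw
  have ipxτ2 := isq _ hpxτc hpxτ
  have ipyτ2 := isq _ hpyτc hpyτ
  -- L2 norms of derivatives bounded by energies
  have hnd : ∀ (g : ℝ × ℝ → ℝ) (g' : ℝ × ℝ → ℝ) (E : ℝ),
      IntegrableOn (fun q => |g q| ^ 2) Omg → IntegrableOn (fun q => |g' q| ^ 2) Omg →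
      (∫ p in Omg, (|g p| ^ 2 + |g' p| ^ 2)) = E → 0 ≤ E →
      ((∫ q in Omg, |g q| ^ 2) ^ ((1:ℝ)/2) ≤ E ^ ((1:ℝ)/2)) := by
    intro g g' E i1 i2 hE hE0
    apply Real.rpow_le_rpow (integral_nonneg (fun q => by positivity)) ?_ (by norm_num)
    rw [← hE]
    apply integral_mono i1 (i1.add i2)
    intro q
    exact le_add_of_nonneg_right (by positivity)
  have hnpxw : (∫ q in Omg, |px w q| ^ 2) ^ ((1:ℝ)/2) ≤ a :=
    hnd (px w) (py w) A ipxw2 ipyw2 hAdef.symm hA0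
  have hnpxτ : (∫ q in Omg, |px τ q| ^ 2) ^ ((1:ℝ)/2) ≤ b :=
    hnd (px τ) (py τ) B ipxτ2 ipyτ2 hBdef.symm hB0
  have hnpyw : (∫ q in Omg, |py w q| ^ 2) ^ ((1:ℝ)/2) ≤ a := by
    have hsw : (∫ p in Omg, (|py w p| ^ 2 + |px w p| ^ 2)) = A := by
      rw [hAdef]; congr 1; funext q; ring
    exact hnd (py w) (px w) A ipyw2 ipxw2 hsw hA0
  have hnpyτ : (∫ q in Omg, |py τ q| ^ 2) ^ ((1:ℝ)/2) ≤ b := by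
    have hsτ : (∫ p in Omg, (|py τ p| ^ 2 + |px τ p| ^ 2)) = B := by
      rw [hBdef]; congr 1; funext q; ring
    exact hnd (py τ) (px τ) B ipyτ2 ipxτ2 hsτ hB0
  -- Poincare
  have hLweq : Lnorm w 2 = (∫ q in Omg, |w q| ^ 2) ^ ((1:ℝ)/2) := by
    simp only [Lnorm, show ((2:ℝ)) = ((2:ℕ):ℝ) by norm_num, Real.rpow_natCast]
  have hLτeq : Lnorm τ 2 = (∫ q in Omg, |τ q| ^ 2) ^ ((1:ℝ)/2) := by
    simp only [Lnorm, show ((2:ℝ)) = ((2:ℕ):ℝ) by norm_num, Real.rpow_natCast]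
  have hgw : gradNorm w = a := by
    rw [hadef, hAdef]; rfl
  have hgτ : gradNorm τ = b := by
    rw [hbdef, hBdef]; rfl
  have hnw : (∫ q in Omg, |w q| ^ 2) ^ ((1:ℝ)/2) ≤ C * a := by
    rw [← hLweq, ← hgw]
    exact hPoincare w (hw.of_le (by norm_num)) hwb
  have hnτ : (∫ q in Omg, |τ q| ^ 2) ^ ((1:ℝ)/2) ≤ C * b := by
    rw [← hLτeq, ← hgτ]
    exact hPoincare τ (hτ2.of_le (by norm_num)) hτb
  have hnw0 : 0 ≤ (∫ q in Omg, |w q| ^ 2) ^ ((1:ℝ)/2) :=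
    Real.rpow_nonneg (integral_nonneg (fun q => by positivity)) _
  have hnτ0 : 0 ≤ (∫ q in Omg, |τ q| ^ 2) ^ ((1:ℝ)/2) :=
    Real.rpow_nonneg (integral_nonneg (fun q => by positivity)) _
  -- Green identity for w
  have hGw := green w (fun q => -(Ra * px τ q)) hw hwb hlapw
      ((continuousOn_const.mul hpxτc).neg) (M := Ra * (2*s))
      (fun q hq => by
        rw [abs_neg, abs_mul, abs_of_pos hRa]
        exact mul_le_mul_of_nonneg_left (hpxτ q hq) hRa.le)
  rw [← hAdef] at hGw
  have hA1 : A = ∫ q in Omg, w q * (Ra * px τ q) := by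
    rw [hGw, ← integral_neg]
    congr 1
    funext q
    ring
  have habs : A ≤ Ra * ∫ q in Omg, |w q| * |px τ q| := by
    calc A ≤ |∫ q in Omg, w q * (Ra * px τ q)| := by rw [hA1]; exact le_abs_self _
      _ ≤ ∫ q in Omg, |w q * (Ra * px τ q)| := by
          have hni := norm_integral_le_integral_norm (μ := volume.restrict Omg)
            (fun q => w q * (Ra * px τ q))
          simpa only [Real.norm_eq_abs] using hni
      _ = ∫ q in Omg, Ra * (|w q| * |px τ q|) := by
          congr 1; funext q
          rw [abs_mul, abs_mul, abs_of_pos hRa]; ring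
      _ = Ra * ∫ q in Omg, |w q| * |px τ q| := integral_const_mul Ra _
  have hcs1 : ∫ q in Omg, |w q| * |px τ q| ≤
      (∫ q in Omg, |w q| ^ 2) ^ ((1:ℝ)/2) * (∫ q in Omg, |px τ q| ^ 2) ^ ((1:ℝ)/2) :=
    cauchySchwarz hwc hpxτc hMwO hpxτ
  have hF1 : A ≤ Ra * ((C * a) * b) := by
    have h2 : (∫ q in Omg, |w q| ^ 2) ^ ((1:ℝ)/2) * (∫ q in Omg, |px τ q| ^ 2) ^ ((1:ℝ)/2)
        ≤ (C * a) * b :=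
      mul_le_mul hnw hnpxτ (Real.rpow_nonneg (integral_nonneg (fun q => by positivity)) _)
        (mul_nonneg hC0.le ha0)
    calc A ≤ Ra * ∫ q in Omg, |w q| * |px τ q| := habs
      _ ≤ Ra * ((C * a) * b) := mul_le_mul_of_nonneg_left (le_trans hcs1 h2) hRa.le
  -- Green identity for τ
  have hJdc : ContinuousOn (fun q => Jac ψ₁ θ₁ q - Jac ψ₂ θ₂ q) Omg := by
    simp only [Jac]
    exact (((contDiffOn_px hψ₁).continuousOn.mul (contDiffOn_py hθ₁).continuousOn).sub
      ((contDiffOn_py hψ₁).continuousOn.mul (contDiffOn_px hθ₁).continuousOn)).sub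
      ((((contDiffOn_px hψ₂).continuousOn.mul (contDiffOn_py hθ₂).continuousOn).sub
      ((contDiffOn_py hψ₂).continuousOn.mul (contDiffOn_px hθ₂).continuousOn)))
  have hJdbdd : ∀ q ∈ Omg, |Jac ψ₁ θ₁ q - Jac ψ₂ θ₂ q| ≤ s * (2*s + 2*s + 2*s + 2*s) := by
    intro q hq
    refine le_trans (hJd q hq) (mul_le_mul_of_nonneg_left ?_ hs0.le)
    have h1 := hpxw q hq; have h2 := hpyw q hq
    have h3 := hpxτ q hq; have h4 := hpyτ q hq
    linarith only [h1, h2, h3, h4]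
  have hGτ := green τ (fun q => Jac ψ₁ θ₁ q - Jac ψ₂ θ₂ q) hτ2 hτb hlapτ hJdc hJdbdd
  rw [← hBdef] at hGτ
  have hBabs : B ≤ ∫ q in Omg, |τ q| * |Jac ψ₁ θ₁ q - Jac ψ₂ θ₂ q| := by
    calc B = -(∫ q in Omg, τ q * (Jac ψ₁ θ₁ q - Jac ψ₂ θ₂ q)) := hGτ
      _ ≤ |∫ q in Omg, τ q * (Jac ψ₁ θ₁ q - Jac ψ₂ θ₂ q)| := neg_le_abs _
      _ ≤ ∫ q in Omg, |τ q * (Jac ψ₁ θ₁ q - Jac ψ₂ θ₂ q)| := by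
          have hni := norm_integral_le_integral_norm (μ := volume.restrict Omg)
            (fun q => τ q * (Jac ψ₁ θ₁ q - Jac ψ₂ θ₂ q))
          simpa only [Real.norm_eq_abs] using hni
      _ = ∫ q in Omg, |τ q| * |Jac ψ₁ θ₁ q - Jac ψ₂ θ₂ q| := by
          congr 1; funext q; rw [abs_mul]
  -- integrable products
  have iprod : ∀ (g : ℝ × ℝ → ℝ), ContinuousOn g Omg → (∀ q ∈ Omg, |g q| ≤ 2*s) →
      IntegrableOn (fun q => |τ q| * |g q|) Omg := by
    intro g hc hbd
    apply integrableOn_bdd (hτc.abs.mul hc.abs) (M := Mτ * (2*s))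
    intro q hq
    rw [abs_of_nonneg (mul_nonneg (abs_nonneg _) (abs_nonneg _))]
    exact mul_le_mul (hMτO q hq) (hbd q hq) (abs_nonneg _) hMτ0
  have i1 := iprod _ hpxwc hpxw
  have i2 := iprod _ hpywc hpyw
  have i3 := iprod _ hpxτc hpxτ
  have i4 := iprod _ hpyτc hpyτ
  have iJ : IntegrableOn (fun q => |τ q| * |Jac ψ₁ θ₁ q - Jac ψ₂ θ₂ q|) Omg := by
    apply integrableOn_bdd (hτc.abs.mul hJdc.abs) (M := Mτ * (s * (2*s + 2*s + 2*s + 2*s)))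
    intro q hq
    rw [abs_of_nonneg (mul_nonneg (abs_nonneg _) (abs_nonneg _))]
    exact mul_le_mul (hMτO q hq) (hJdbdd q hq) (abs_nonneg _) hMτ0
  have hBmono : (∫ q in Omg, |τ q| * |Jac ψ₁ θ₁ q - Jac ψ₂ θ₂ q|) ≤
      ∫ q in Omg, (s * (|τ q| * |px w q|) + s * (|τ q| * |py w q|)
        + s * (|τ q| * |px τ q|) + s * (|τ q| * |py τ q|)) := by
    have irhs : IntegrableOn (fun q => s * (|τ q| * |px w q|) + s * (|τ q| * |py w q|)
        + s * (|τ q| * |px τ q|) + s * (|τ q| * |py τ q|)) Omg :=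
      (((i1.const_mul s).add (i2.const_mul s)).add (i3.const_mul s)).add (i4.const_mul s)
    apply setIntegral_mono_on iJ irhs Omg_meas
    intro q hq
    have hJq := hJd q hq
    have h0 : (0:ℝ) ≤ |τ q| := abs_nonneg _
    have hm := mul_le_mul_of_nonneg_left hJq h0
    nlinarith only [hm]
  have hj1 : IntegrableOn (fun q => s * (|τ q| * |px w q|)) Omg := i1.const_mul s
  have hj2 : IntegrableOn (fun q => s * (|τ q| * |py w q|)) Omg := i2.const_mul s
  have hj3 : IntegrableOn (fun q => s * (|τ q| * |px τ q|)) Omg := i3.const_mul s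
  have hj4 : IntegrableOn (fun q => s * (|τ q| * |py τ q|)) Omg := i4.const_mul s
  have hj12 : IntegrableOn (fun q => s * (|τ q| * |px w q|) + s * (|τ q| * |py w q|)) Omg :=
    hj1.add hj2
  have hj123 : IntegrableOn (fun q => s * (|τ q| * |px w q|) + s * (|τ q| * |py w q|)
      + s * (|τ q| * |px τ q|)) Omg := hj12.add hj3
  have hsplit : (∫ q in Omg, (s * (|τ q| * |px w q|) + s * (|τ q| * |py w q|)
        + s * (|τ q| * |px τ q|) + s * (|τ q| * |py τ q|))) =
      s * ((∫ q in Omg, |τ q| * |px w q|) + (∫ q in Omg, |τ q| * |py w q|)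
        + (∫ q in Omg, |τ q| * |px τ q|) + (∫ q in Omg, |τ q| * |py τ q|)) := by
    calc (∫ q in Omg, (s * (|τ q| * |px w q|) + s * (|τ q| * |py w q|)
          + s * (|τ q| * |px τ q|) + s * (|τ q| * |py τ q|)))
        = (∫ q in Omg, (s * (|τ q| * |px w q|) + s * (|τ q| * |py w q|)
          + s * (|τ q| * |px τ q|))) + ∫ q in Omg, s * (|τ q| * |py τ q|) :=
          integral_add hj123 hj4
      _ = ((∫ q in Omg, (s * (|τ q| * |px w q|) + s * (|τ q| * |py w q|)))
          + ∫ q in Omg, s * (|τ q| * |px τ q|)) + ∫ q in Omg, s * (|τ q| * |py τ q|) := by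
          exact congrArg (fun z => z + ∫ q in Omg, s * (|τ q| * |py τ q|))
            (integral_add hj12 hj3)
      _ = (((∫ q in Omg, s * (|τ q| * |px w q|)) + ∫ q in Omg, s * (|τ q| * |py w q|))
          + ∫ q in Omg, s * (|τ q| * |px τ q|)) + ∫ q in Omg, s * (|τ q| * |py τ q|) := by
          exact congrArg (fun z => (z + ∫ q in Omg, s * (|τ q| * |px τ q|))
            + ∫ q in Omg, s * (|τ q| * |py τ q|)) (integral_add hj1 hj2)
      _ = ((s * (∫ q in Omg, |τ q| * |px w q|) + s * (∫ q in Omg, |τ q| * |py w q|))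
          + s * (∫ q in Omg, |τ q| * |px τ q|)) + s * (∫ q in Omg, |τ q| * |py τ q|) := by
          rw [integral_const_mul, integral_const_mul, integral_const_mul, integral_const_mul]
      _ = s * ((∫ q in Omg, |τ q| * |px w q|) + (∫ q in Omg, |τ q| * |py w q|)
          + (∫ q in Omg, |τ q| * |px τ q|) + (∫ q in Omg, |τ q| * |py τ q|)) := by ring
  -- Cauchy-Schwarz for the four products
  have c1 : (∫ q in Omg, |τ q| * |px w q|) ≤ (C * b) * a := by
    refine le_trans (cauchySchwarz hτc hpxwc hMτO hpxw) ?_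
    exact mul_le_mul hnτ hnpxw
      (Real.rpow_nonneg (integral_nonneg (fun q => by positivity)) _) (mul_nonneg hC0.le hb0)
  have c2 : (∫ q in Omg, |τ q| * |py w q|) ≤ (C * b) * a := by
    refine le_trans (cauchySchwarz hτc hpywc hMτO hpyw) ?_
    exact mul_le_mul hnτ hnpyw
      (Real.rpow_nonneg (integral_nonneg (fun q => by positivity)) _) (mul_nonneg hC0.le hb0)
  have c3 : (∫ q in Omg, |τ q| * |px τ q|) ≤ (C * b) * b := by
    refine le_trans (cauchySchwarz hτc hpxτc hMτO hpxτ) ?_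
    exact mul_le_mul hnτ hnpxτ
      (Real.rpow_nonneg (integral_nonneg (fun q => by positivity)) _) (mul_nonneg hC0.le hb0)
  have c4 : (∫ q in Omg, |τ q| * |py τ q|) ≤ (C * b) * b := by
    refine le_trans (cauchySchwarz hτc hpyτc hMτO hpyτ) ?_
    exact mul_le_mul hnτ hnpyτ
      (Real.rpow_nonneg (integral_nonneg (fun q => by positivity)) _) (mul_nonneg hC0.le hb0)
  have hF2 : B ≤ s * ((C * b) * a + (C * b) * a + (C * b) * b + (C * b) * b) := by
    refine le_trans hBabs (le_trans hBmono ?_)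
    rw [hsplit]
    apply mul_le_mul_of_nonneg_left ?_ hs0.le
    linarith only [c1, c2, c3, c4]
    -- endgame arithmetic
  have hsR : s * Real.sqrt 2 = R := by
    rw [hsdef, div_mul_eq_mul_div, mul_comm, ← div_mul_eq_mul_div]
    field_simp
  have hK : Ra * C / 2 + 3 * s * C < 1 := by
    have hR4 : 2 * Real.sqrt 2 * R = 4 * s := by
      rw [← hsR]
      calc 2 * Real.sqrt 2 * (s * Real.sqrt 2) = 2 * s * (Real.sqrt 2 * Real.sqrt 2) := by ring
        _ = 4 * s := by rw [hs2]; ring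
    have h3 : 3 * s * C ≤ 2 * Real.sqrt 2 * R * C := by
      have h5 : 3 * s ≤ 2 * Real.sqrt 2 * R := by
        rw [hR4]
        linarith only [hs0.le]
      exact mul_le_mul_of_nonneg_right h5 hC0.le
    have h4 : Ra * C ≤ Ra := mul_le_of_le_one_right hRa.le hC1
    linarith only [h3, h4, hcond2]
  have hF1' : a ^ 2 ≤ Ra * ((C * a) * b) := by rw [ha2]; exact hF1
  have hF2' : b ^ 2 ≤ s * ((C * b) * a + (C * b) * a + (C * b) * b + (C * b) * b) := by
    rw [hb2]; exact hF2
  have hRaC : 0 < Ra * C := mul_pos hRa hC0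
  have hsC : 0 < s * C := mul_pos hs0 hC0
  have h1 : Ra * C * (a * b) ≤ Ra * C / 2 * (a ^ 2 + b ^ 2) := by
    linarith only [mul_nonneg hRaC.le (sq_nonneg (a - b))]
  have h2 : s * C * (2 * (a * b)) ≤ s * C * (a ^ 2 + b ^ 2) := by
    linarith only [mul_nonneg hsC.le (sq_nonneg (a - b))]
  have h3 : s * C * (2 * b ^ 2) ≤ s * C * (2 * (a ^ 2 + b ^ 2)) := by
    linarith only [mul_nonneg hsC.le (sq_nonneg a)]
  have hsum : a ^ 2 + b ^ 2 ≤ (Ra * C / 2 + 3 * s * C) * (a ^ 2 + b ^ 2) := by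
    have e1 : Ra * ((C * a) * b) = Ra * C * (a * b) := by ring
    have e2 : s * ((C * b) * a + (C * b) * a + (C * b) * b + (C * b) * b)
        = s * C * (2 * (a * b)) + s * C * (2 * b ^ 2) := by ring
    rw [e1] at hF1'
    rw [e2] at hF2'
    have goal_eq : (Ra * C / 2 + 3 * s * C) * (a ^ 2 + b ^ 2)
        = Ra * C / 2 * (a ^ 2 + b ^ 2) + s * C * (a ^ 2 + b ^ 2)
          + s * C * (2 * (a ^ 2 + b ^ 2)) := by ring
    rw [goal_eq]
    linarith only [hF1', hF2', h1, h2, h3]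
  have hab0 : a ^ 2 + b ^ 2 ≤ 0 := by
    by_contra hpos
    push_neg at hpos
    have hlt := mul_lt_mul_of_pos_right hK hpos
    rw [one_mul] at hlt
    linarith only [hsum, hlt]
  have hA00 : A = 0 := by
    linarith only [hab0, sq_nonneg a, sq_nonneg b, ha2, hb2]
  have hB00 : B = 0 := by
    linarith only [hab0, sq_nonneg a, sq_nonneg b, ha2, hb2]
  have ha00 : a = 0 := by
    rw [hadef, hA00]
    exact Real.zero_rpow (by norm_num)
  have hb00 : b = 0 := by
    rw [hbdef, hB00]
    exact Real.zero_rpow (by norm_num)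
  -- conclude w = 0 and τ = 0 on Omg
  have hIw : (∫ q in Omg, |w q| ^ 2) = 0 := by
    have h1 : (∫ q in Omg, |w q| ^ 2) ^ ((1:ℝ)/2) ≤ 0 := by
      simpa [ha00] using hnw
    have h2 : 0 ≤ (∫ q in Omg, |w q| ^ 2) := integral_nonneg (fun q => by positivity)
    by_contra hne
    have h3 : 0 < (∫ q in Omg, |w q| ^ 2) := lt_of_le_of_ne h2 (Ne.symm hne)
    have h4 := Real.rpow_pos_of_pos h3 ((1:ℝ)/2)
    linarith only [h1, h4]
  have hIτ : (∫ q in Omg, |τ q| ^ 2) = 0 := by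
    have h1 : (∫ q in Omg, |τ q| ^ 2) ^ ((1:ℝ)/2) ≤ 0 := by
      simpa [hb00] using hnτ
    have h2 : 0 ≤ (∫ q in Omg, |τ q| ^ 2) := integral_nonneg (fun q => by positivity)
    by_contra hne
    have h3 : 0 < (∫ q in Omg, |τ q| ^ 2) := lt_of_le_of_ne h2 (Ne.symm hne)
    have h4 := Real.rpow_pos_of_pos h3 ((1:ℝ)/2)
    linarith only [h1, h4]
  have hw0 := eq_zero_of_integral_sq_zero hwc hMwO hIw
  have hτ0 := eq_zero_of_integral_sq_zero hτc hMτO hIτ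
  intro p hp
  constructor
  · have hzz := hw0 p hp
    simp only [hwdef] at hzz
    linarith only [hzz]
  · have hzz := hτ0 p hp
    simp only [hτdef] at hzz
    linarith only [hzz]
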